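/- Let V be a finite-dimensional complex vector space and let h, e, f be linear endomorphisms of V satisfying the sl₂ relations [h, e] = 2e, [h, f] = −2f, [e, f] = h. Then for every natural number k, the restriction of e^k to the eigenspace of h with eigenvalue −k is a linear isomorphism onto the eigenspace of h with eigenvalue k. (This is the representation-theoretic content of the hard Lefschetz theorem.) -/

import Mathlib

open Module Submodule

section helpers

variable {V : Type*} [AddCommGroup V] [Module ℂ V]

private lemma hl_raise {h e : Module.End ℂ V}
    (hhe : h * e - e * h = (2 : ℂ) • e) {μ : ℂ} {v : V}
    (hv : h v = μ • v) : h (e v) = (μ + 2) • (e v) := by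
  have h1 := congrArg (fun g : Module.End ℂ V => g v) hhe
  simp only [LinearMap.sub_apply, Module.End.mul_apply, LinearMap.smul_apply] at h1
  have h2 : h (e v) = e (h v) + (2 : ℂ) • e v := by
    rw [← h1]; abel
  rw [h2, hv, map_smul, add_smul]

private lemma hl_raise_pow {h e : Module.End ℂ V}
    (hhe : h * e - e * h = (2 : ℂ) • e) {μ : ℂ} {v : V} (j : ℕ)
    (hv : h v = μ • v) : h ((e ^ j) v) = (μ + 2 * j) • ((e ^ j) v) := by
  induction j with
  | zero => simpa using hv
  | succ j ih =>
    have : (e ^ (j + 1)) v = e ((e ^ j) v) := by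
      rw [pow_succ', Module.End.mul_apply]
    rw [this]
    have := hl_raise hhe ih
    rw [this]
    push_cast
    ring_nf

private lemma hl_mapQ_mul (U : Submodule ℂ V) (a b : Module.End ℂ V)
    (ha : U ≤ U.comap a) (hb : U ≤ U.comap b) :
    U.mapQ U a ha * U.mapQ U b hb = U.mapQ U (a * b) (fun x hx => ha (hb hx)) := by
  apply Submodule.linearMap_qext
  ext x
  simp [Submodule.mapQ_apply]

private lemma hl_mapQ_sub (U : Submodule ℂ V) (a b : Module.End ℂ V)
    (ha : U ≤ U.comap a) (hb : U ≤ U.comap b) :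
    U.mapQ U a ha - U.mapQ U b hb
      = U.mapQ U (a - b) (fun x hx => by
          simp only [Submodule.mem_comap, LinearMap.sub_apply]
          exact sub_mem (Submodule.mem_comap.mp (ha hx)) (Submodule.mem_comap.mp (hb hx))) := by
  apply Submodule.linearMap_qext
  ext x
  simp [Submodule.mapQ_apply]

private lemma hl_mapQ_smul (U : Submodule ℂ V) (a : Module.End ℂ V) (c : ℂ)
    (ha : U ≤ U.comap a) :
    c • U.mapQ U a ha = U.mapQ U (c • a) (fun x hx => by
        simp only [Submodule.mem_comap, LinearMap.smul_apply]
        exact smul_mem _ c (Submodule.mem_comap.mp (ha hx))) := by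
  apply Submodule.linearMap_qext
  ext x
  simp [Submodule.mapQ_apply]

private lemma hl_mapQ_neg (U : Submodule ℂ V) (a : Module.End ℂ V)
    (ha : U ≤ U.comap a) :
    -U.mapQ U a ha = U.mapQ U (-a) (fun x hx => by
        simp only [Submodule.mem_comap, LinearMap.neg_apply]
        exact neg_mem (Submodule.mem_comap.mp (ha hx))) := by
  apply Submodule.linearMap_qext
  ext x
  simp [Submodule.mapQ_apply]

private lemma hl_mapQ_congr (U : Submodule ℂ V) {a b : Module.End ℂ V}
    (hab : a = b) (ha : U ≤ U.comap a) :
    U.mapQ U a ha = U.mapQ U b (hab ▸ ha) := by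
  subst hab; rfl

end helpers
attribute [local instance] LieRing.ofAssociativeRing
open Module Submodule in
private lemma hl_inj (N : ℕ) :
    ∀ {V : Type*} [AddCommGroup V] [Module ℂ V] [FiniteDimensional ℂ V]
      (h e f : Module.End ℂ V),
      h * e - e * h = (2 : ℂ) • e →
      h * f - f * h = -((2 : ℂ) • f) →
      e * f - f * e = h →
      Module.finrank ℂ V ≤ N →
      ∀ (k : ℕ) (v : V), h v = (-(k : ℂ)) • v → (e ^ k) v = 0 → v = 0 := by
  induction N with
  | zero =>
    intro V _ _ _ h e f _ _ _ hV k v _ _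
    have : Module.finrank ℂ V = 0 := Nat.le_zero.mp hV
    have : Subsingleton V := Module.finrank_zero_iff.mp this
    exact Subsingleton.elim v 0
  | succ N IH =>
    intro V _ _ _ h e f hhe hhf hef hV k v hv hv0
    by_contra hvne
    -- k = 0 is impossible
    rcases Nat.eq_zero_or_pos k with hk0 | hkpos
    · subst hk0; simp at hv0; exact hvne hv0
    -- h = 0 is impossible
    by_cases hh : h = 0
    · apply hvne
      have : (0 : V) = (-(k : ℂ)) • v := by rw [← hv, hh]; rfl
      have hkne : (-(k : ℂ)) ≠ 0 := by
        simp only [ne_eq, neg_eq_zero, Nat.cast_eq_zero]; omega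
      have := (smul_eq_zero (r := -(k:ℂ)) (m := v)).mp this.symm
      tauto
    -- minimal m with e^m v = 0
    have hex : ∃ m, (e ^ m) v = 0 := ⟨k, hv0⟩
    classical
    set m := Nat.find hex with hm_def
    have hm : (e ^ m) v = 0 := Nat.find_spec hex
    have hmk : m ≤ k := Nat.find_min' hex hv0
    have hmne : m ≠ 0 := by
      intro h0
      rw [h0] at hm; simp at hm; exact hvne hm
    obtain ⟨p, hp⟩ : ∃ p, m = p + 1 := ⟨m - 1, by omega⟩
    set w := (e ^ p) v with hw_def
    have hwne : w ≠ 0 := Nat.find_min hex (by omega)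
    have hew : e w = 0 := by
      rw [hw_def, ← Module.End.mul_apply, ← pow_succ', ← hp]; exact hm
    set μ : ℂ := -(k : ℂ) + 2 * p with hμ_def
    have hhw : h w = μ • w := hl_raise_pow hhe p hv
    -- sl2 triple
    have t : IsSl2Triple h e f := by
      refine ⟨hh, by rw [Ring.lie_def, hef], ?_, ?_⟩
      · rw [Ring.lie_def, hhe]
        exact (two_smul ℂ e).trans (two_nsmul e).symm
      · rw [Ring.lie_def, hhf, neg_inj]
        exact (two_smul ℂ f).trans (two_nsmul f).symm
    have P : t.HasPrimitiveVectorWith w μ :=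
      ⟨hwne, by rwa [Module.End.lie_apply], by rwa [Module.End.lie_apply]⟩
    have key : LieModule.toEnd ℂ (Module.End ℂ V) V f = f := by
      rw [LieModule.toEnd_module_end]; rfl
    obtain ⟨n, hn⟩ := P.exists_nat
    -- string facts
    have hFh : ∀ j : ℕ, h ((f ^ j) w) = (μ - 2 * j) • (f ^ j) w := fun j => by
      have := P.lie_h_pow_toEnd_f j
      rwa [key, Module.End.lie_apply] at this
    have hFe : ∀ j : ℕ, e ((f ^ (j + 1)) w) = (((j : ℂ) + 1) * (μ - j)) • (f ^ j) w := fun j => by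
      have := P.lie_e_pow_succ_toEnd_f j
      rwa [key, Module.End.lie_apply] at this
    have hFtop : (f ^ (n + 1)) w = 0 := by
      have := P.pow_toEnd_f_eq_zero_of_eq_nat hn
      rwa [key] at this
    -- integer bookkeeping
    have hzn : (n : ℤ) = 2 * p - k := by
      have h1 : ((n : ℤ) : ℂ) = ((2 * (p : ℤ) - (k : ℤ) : ℤ) : ℂ) := by
        push_cast
        rw [← hn, hμ_def]; ring
      exact_mod_cast h1
    have hpk : p + 1 ≤ k := by omega
    have hnk : (n : ℤ) + 2 ≤ k := by omega
    -- the string submodule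
    set U : Submodule ℂ V :=
      Submodule.span ℂ (Set.range fun j : Fin (n + 1) => (f ^ (j : ℕ)) w) with hU_def
    have hmemU : ∀ j : ℕ, j ≤ n → (f ^ j) w ∈ U :=
      fun j hj => Submodule.subset_span ⟨⟨j, by omega⟩, rfl⟩
    have hwU : w ∈ U := by simpa using hmemU 0 (Nat.zero_le n)
    have hUf : U ≤ U.comap f := by
      rw [hU_def, Submodule.span_le]
      rintro _ ⟨j, rfl⟩
      simp only [SetLike.mem_coe, Submodule.mem_comap]
      have hstep : f ((f ^ (j : ℕ)) w) = (f ^ ((j : ℕ) + 1)) w := by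
        rw [← Module.End.mul_apply, ← pow_succ']
      rw [hstep]
      rcases Nat.lt_or_ge (j : ℕ) n with hlt | hge
      · exact hmemU _ (by omega)
      · have : (j : ℕ) = n := by omega
        rw [this, hFtop]; exact zero_mem U
    have hUh : U ≤ U.comap h := by
      rw [hU_def, Submodule.span_le]
      rintro _ ⟨j, rfl⟩
      simp only [SetLike.mem_coe, Submodule.mem_comap]
      rw [hFh]
      exact Submodule.smul_mem _ _ (hmemU _ (by omega))
    have hUe : U ≤ U.comap e := by
      rw [hU_def, Submodule.span_le]
      rintro _ ⟨j, rfl⟩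
      simp only [SetLike.mem_coe, Submodule.mem_comap]
      rcases Nat.eq_zero_or_pos (j : ℕ) with h0 | hpos
      · rw [h0]; simpa using (hew ▸ zero_mem U)
      · obtain ⟨i, hi⟩ : ∃ i, (j : ℕ) = i + 1 := ⟨(j : ℕ) - 1, by omega⟩
        rw [hi, hFe]
        exact Submodule.smul_mem _ _ (hmemU _ (by omega))
    -- pass to the quotient
    set h' := U.mapQ U h hUh with hh'_def
    set e' := U.mapQ U e hUe with he'_def
    set f' := U.mapQ U f hUf with hf'_def
    have hhe' : h' * e' - e' * h' = (2 : ℂ) • e' := by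
      rw [hh'_def, he'_def, hl_mapQ_mul, hl_mapQ_mul, hl_mapQ_sub, hl_mapQ_smul]
      exact hl_mapQ_congr U hhe _
    have hhf' : h' * f' - f' * h' = -((2 : ℂ) • f') := by
      rw [hh'_def, hf'_def, hl_mapQ_mul, hl_mapQ_mul, hl_mapQ_sub, hl_mapQ_smul, hl_mapQ_neg]
      exact hl_mapQ_congr U hhf _
    have hef' : e' * f' - f' * e' = h' := by
      rw [he'_def, hf'_def, hh'_def, hl_mapQ_mul, hl_mapQ_mul, hl_mapQ_sub]
      exact hl_mapQ_congr U hef _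
    -- dimension drop
    have hUne : U ≠ ⊥ := fun hbot => hwne (by simpa [hbot] using hwU)
    have hUpos : 0 < Module.finrank ℂ U := by
      rcases Nat.eq_zero_or_pos (Module.finrank ℂ U) with h0 | h; swap
      · exact h
      · exact absurd (Submodule.finrank_eq_zero.mp h0) hUne
    have hdim : Module.finrank ℂ (V ⧸ U) ≤ N := by
      have := Submodule.finrank_quotient_add_finrank U
      omega
    -- apply induction hypothesis
    have hq1 : h' (U.mkQ v) = (-(k : ℂ)) • (U.mkQ v) := by
      rw [hh'_def, Submodule.mkQ_apply, Submodule.mapQ_apply, hv, Submodule.Quotient.mk_smul]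
    have hq2 : (e' ^ k) (U.mkQ v) = 0 := by
      rw [he'_def, ← Submodule.mapQ_pow, Submodule.mkQ_apply, Submodule.mapQ_apply, hv0, Submodule.Quotient.mk_zero]
    have hq0 : U.mkQ v = 0 := IH h' e' f' hhe' hhf' hef' hdim k (U.mkQ v) hq1 hq2
    have hvU : v ∈ U := (Submodule.Quotient.mk_eq_zero U).mp hq0
    -- final contradiction via independence of eigenspaces
    have hUle : U ≤ ⨆ (c : ℂ) (_ : c ≠ -(k : ℂ)), Module.End.eigenspace h c := by
      rw [hU_def, Submodule.span_le]
      rintro _ ⟨j, rfl⟩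
      have hcne : μ - 2 * (j : ℕ) ≠ -(k : ℂ) := by
        intro hc
        have : ((n : ℤ) - 2 * (j : ℕ) : ℤ) = ((-(k : ℤ) : ℤ)) := by
          have : ((((n : ℤ) - 2 * (j : ℕ)) : ℤ) : ℂ) = ((-(k : ℤ) : ℤ) : ℂ) := by
            push_cast
            rw [← hn]; exact hc
          exact_mod_cast this
        have hjn : (j : ℕ) ≤ n := by omega
        omega
      have hmem : (f ^ (j : ℕ)) w ∈ Module.End.eigenspace h (μ - 2 * (j : ℕ)) :=
        Module.End.mem_eigenspace_iff.mpr (hFh (j : ℕ))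
      exact Submodule.mem_iSup_of_mem _ (Submodule.mem_iSup_of_mem hcne hmem)
    have hdisj := (Module.End.eigenspaces_iSupIndep h) (-(k : ℂ))
    have hvE : v ∈ Module.End.eigenspace h (-(k : ℂ)) := Module.End.mem_eigenspace_iff.mpr hv
    exact hvne (Submodule.disjoint_def.mp hdisj v hvE (hUle hvU))
/-- For an sl₂-triple `(h, e, f)` acting on a finite-dimensional
complex vector space, `e^k` restricts to a linear isomorphism from the
`(−k)`-eigenspace of `h` onto the `k`-eigenspace of `h` (hard Lefschetz). -/
theorem sl2_hard_lefschetz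
    {V : Type*} [AddCommGroup V] [Module ℂ V] [FiniteDimensional ℂ V]
    (h e f : Module.End ℂ V)
    (hhe : h * e - e * h = (2 : ℂ) • e)
    (hhf : h * f - f * h = -((2 : ℂ) • f))
    (hef : e * f - f * e = h) :
    ∀ k : ℕ, ∃ g : (Module.End.eigenspace h (-(k : ℂ))) ≃ₗ[ℂ]
        (Module.End.eigenspace h (k : ℂ)),
      ∀ v : Module.End.eigenspace h (-(k : ℂ)), (g v : V) = (e ^ k) (v : V) := by
  intro k
  -- the symmetric triple
  have r1 : (-h) * f - f * (-h) = (2 : ℂ) • f := by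
    have : (-h) * f - f * (-h) = -(h * f - f * h) := by noncomm_ring
    rw [this, hhf, neg_neg]
  have r2 : (-h) * e - e * (-h) = -((2 : ℂ) • e) := by
    have : (-h) * e - e * (-h) = -(h * e - e * h) := by noncomm_ring
    rw [this, hhe]
  have r3 : f * e - e * f = -h := by
    rw [← hef]; noncomm_ring
  -- e^k maps E(-k) into E(k)
  have hmap : ∀ x ∈ Module.End.eigenspace h (-(k : ℂ)),
      (e ^ k) x ∈ Module.End.eigenspace h (k : ℂ) := by
    intro x hx
    rw [Module.End.mem_eigenspace_iff] at hx ⊢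
    rw [hl_raise_pow hhe k hx]
    congr 1
    push_cast; ring
  -- f^k maps E(k) into E(-k)
  have hmap' : ∀ x ∈ Module.End.eigenspace h (k : ℂ),
      (f ^ k) x ∈ Module.End.eigenspace h (-(k : ℂ)) := by
    intro x hx
    rw [Module.End.mem_eigenspace_iff] at hx ⊢
    have hx' : (-h) x = (-(k : ℂ)) • x := by
      simp [hx]
    have := hl_raise_pow r1 k hx'
    have h2 : (-h) ((f ^ k) x) = (k : ℂ) • ((f ^ k) x) := by
      rw [this]; congr 1; push_cast; ring
    have h3 : -(h ((f ^ k) x)) = (k : ℂ) • ((f ^ k) x) := by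
      simpa using h2
    rw [← neg_neg (h ((f ^ k) x)), h3, ← neg_smul]
  set φ : (Module.End.eigenspace h (-(k : ℂ))) →ₗ[ℂ] (Module.End.eigenspace h (k : ℂ)) :=
    (e ^ k).restrict hmap with hφ_def
  have hinjφ : Function.Injective φ := by
    intro x y hxy
    have hd : (e ^ k) ((x : V) - (y : V)) = 0 := by
      have := congrArg (Subtype.val) hxy
      simp only [hφ_def, LinearMap.restrict_apply] at this
      rw [map_sub, this, sub_self]
    have hmem : h ((x : V) - (y : V)) = (-(k : ℂ)) • ((x : V) - (y : V)) := by
      have hx := Module.End.mem_eigenspace_iff.mp x.2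
      have hy := Module.End.mem_eigenspace_iff.mp y.2
      rw [map_sub, hx, hy, smul_sub]
    have := hl_inj (Module.finrank ℂ V) h e f hhe hhf hef le_rfl k _ hmem hd
    exact Subtype.ext (sub_eq_zero.mp this)
  have hinjψ : Function.Injective ((f ^ k).restrict hmap') := by
    intro x y hxy
    have hd : (f ^ k) ((x : V) - (y : V)) = 0 := by
      have := congrArg (Subtype.val) hxy
      simp only [LinearMap.restrict_apply] at this
      rw [map_sub, this, sub_self]
    have hmem : (-h) ((x : V) - (y : V)) = (-(k : ℂ)) • ((x : V) - (y : V)) := by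
      have hx := Module.End.mem_eigenspace_iff.mp x.2
      have hy := Module.End.mem_eigenspace_iff.mp y.2
      simp only [LinearMap.neg_apply, map_sub, hx, hy]
      rw [neg_smul, smul_sub]; abel
    have := hl_inj (Module.finrank ℂ V) (-h) f e r1 r2 r3 le_rfl k _ hmem hd
    exact Subtype.ext (sub_eq_zero.mp this)
  have hdim : Module.finrank ℂ (Module.End.eigenspace h (-(k : ℂ)))
      = Module.finrank ℂ (Module.End.eigenspace h (k : ℂ)) :=
    le_antisymm (LinearMap.finrank_le_finrank_of_injective hinjφ)
      (LinearMap.finrank_le_finrank_of_injective hinjψ)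
  refine ⟨φ.linearEquivOfInjective hinjφ hdim, fun v => ?_⟩
  rw [LinearMap.linearEquivOfInjective_apply]
  simp [hφ_def, LinearMap.restrict_apply]
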